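/- The gradient of $\omega^*(Y) = \log(\operatorname{tr}(\exp(Y + I_n)))$ on the space of symmetric matrices is $\nabla \omega^*(Y) = \exp(Y + I_n)/\operatorname{tr}(\exp(Y + I_n))$. -/

import Mathlib

open Matrix

/-- Matrix exponential. -/
noncomputable def expm {n : ℕ} (A : Matrix (Fin n) (Fin n) ℝ) : Matrix (Fin n) (Fin n) ℝ :=
  NormedSpace.exp A

/-- Matrix logarithm of a symmetric matrix, defined via the spectral decomposition
(with the convention `log 0 = 0` on the kernel, since `Real.log 0 = 0`). -/
noncomputable def mlog {n : ℕ} (A : Matrix (Fin n) (Fin n) ℝ) : Matrix (Fin n) (Fin n) ℝ :=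
  if h : A.IsHermitian then
    (h.eigenvectorUnitary : Matrix (Fin n) (Fin n) ℝ) *
      Matrix.diagonal (fun i => Real.log (h.eigenvalues i)) *
      star (h.eigenvectorUnitary : Matrix (Fin n) (Fin n) ℝ)
  else 0

/-- `tr(X log X)` for a symmetric matrix `X`, via eigenvalues (with `0 log 0 = 0`). -/
noncomputable def trXlogX {n : ℕ} (A : Matrix (Fin n) (Fin n) ℝ) : ℝ :=
  if h : A.IsHermitian then ∑ i, h.eigenvalues i * Real.log (h.eigenvalues i) else 0

/-- The quantum entropy `ω(X) = tr(X log X - X)` of a symmetric matrix, via eigenvalues. -/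
noncomputable def qent {n : ℕ} (A : Matrix (Fin n) (Fin n) ℝ) : ℝ :=
  trXlogX A - A.trace

/-- The conjugate of the quantum entropy, `ω*(Y) = log tr exp(Y + Iₙ)`. -/
noncomputable def qentStar {n : ℕ} (Y : Matrix (Fin n) (Fin n) ℝ) : ℝ :=
  Real.log (expm (Y + 1)).trace

/-- Trace norm (sum of singular values) of a symmetric matrix, via eigenvalues. -/
noncomputable def trNorm {n : ℕ} (A : Matrix (Fin n) (Fin n) ℝ) : ℝ :=
  if h : A.IsHermitian then ∑ i, |h.eigenvalues i| else 0

/-- Spectral norm (largest singular value) of a symmetric matrix, via eigenvalues. -/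
noncomputable def specNorm {n : ℕ} (A : Matrix (Fin n) (Fin n) ℝ) : ℝ :=
  if h : A.IsHermitian then ⨆ i, |h.eigenvalues i| else 0

/-- The Gibbs state `exp(Y + Iₙ) / tr(exp(Y + Iₙ))`. -/
noncomputable def gibbs {n : ℕ} (Y : Matrix (Fin n) (Fin n) ℝ) : Matrix (Fin n) (Fin n) ℝ :=
  ((expm (Y + 1)).trace)⁻¹ • expm (Y + 1)

/-- The Fenchel coupling `H(Q, Y) = ω(Q) + ω*(Y) - tr(QY)`. -/
noncomputable def fenchelH {n : ℕ} (Q Y : Matrix (Fin n) (Fin n) ℝ) : ℝ :=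
  qent Q + qentStar Y - (Q * Y).trace

attribute [local instance] Matrix.frobeniusNormedAddCommGroup Matrix.frobeniusNormedSpace

section Aux

attribute [local instance] Matrix.frobeniusNormedRing Matrix.frobeniusNormedAlgebra

variable {n : ℕ}

noncomputable abbrev frobTop : TopologicalSpace (Matrix (Fin n) (Fin n) ℝ) :=
  Matrix.frobeniusNormedAddCommGroup.toUniformSpace.toTopologicalSpace

attribute [local instance] frobTop

variable {n : ℕ}

noncomputable def powD (A : Matrix (Fin n) (Fin n) ℝ) (k : ℕ) : Matrix (Fin n) (Fin n) ℝ →L[ℝ] Matrix (Fin n) (Fin n) ℝ :=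
  ∑ j ∈ Finset.range k, ContinuousLinearMap.mulLeftRight ℝ _ (A ^ j) (A ^ (k - 1 - j))

lemma hasFDerivAt_pow_mat (k : ℕ) (A : Matrix (Fin n) (Fin n) ℝ) :
    HasFDerivAt (fun B : Matrix (Fin n) (Fin n) ℝ => B ^ k) (powD A k) A := by
  induction k with
  | zero => simpa [powD] using hasFDerivAt_const (1 : Matrix (Fin n) (Fin n) ℝ) A
  | succ k ih =>
    have h := ih.mul' (hasFDerivAt_id A)
    simp only [id] at h
    have e : (fun y : Matrix (Fin n) (Fin n) ℝ => y ^ k * y) = fun B : Matrix (Fin n) (Fin n) ℝ => B ^ (k + 1) := by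
      funext B; rw [← pow_succ]
    replace h : HasFDerivAt (fun B : Matrix (Fin n) (Fin n) ℝ => B ^ (k + 1))
        (A ^ k • ContinuousLinearMap.id ℝ (Matrix (Fin n) (Fin n) ℝ) + MulOpposite.op A • powD A k) A := by
      rw [← e]; exact h
    have heq : powD A (k + 1) =
        A ^ k • ContinuousLinearMap.id ℝ (Matrix (Fin n) (Fin n) ℝ) + MulOpposite.op A • powD A k := by
      refine ContinuousLinearMap.ext fun H => ?_
      simp only [powD, ContinuousLinearMap.sum_apply, ContinuousLinearMap.mulLeftRight_apply,
        ContinuousLinearMap.add_apply, ContinuousLinearMap.smul_apply,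
        ContinuousLinearMap.smulRight_apply, ContinuousLinearMap.coe_id', id_eq,
        smul_eq_mul, op_smul_eq_mul, Nat.add_sub_cancel]
      rw [Finset.sum_range_succ, Nat.sub_self, pow_zero, mul_one, add_comm, Finset.sum_mul]
      congr 1
      refine Finset.sum_congr rfl fun j hj => ?_
      rw [Finset.mem_range] at hj
      rw [mul_assoc (A ^ j * H) (A ^ (k - 1 - j)) A, ← pow_succ]
      congr 2
      omega
    exact h.congr_fderiv heq.symm

open NormedSpace
noncomputable def tCLM (m : ℕ) : Matrix (Fin m) (Fin m) ℝ →L[ℝ] ℝ :=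
  LinearMap.toContinuousLinearMap (Matrix.traceLinearMap (Fin m) ℝ ℝ)

@[simp] lemma tCLM_apply (A : Matrix (Fin n) (Fin n) ℝ) : tCLM n A = A.trace := rfl

noncomputable def trMulCLM (m : ℕ) :
    Matrix (Fin m) (Fin m) ℝ →L[ℝ] (Matrix (Fin m) (Fin m) ℝ →L[ℝ] ℝ) :=
  (ContinuousLinearMap.compL ℝ (Matrix (Fin m) (Fin m) ℝ) (Matrix (Fin m) (Fin m) ℝ) ℝ
    (tCLM m)).comp (ContinuousLinearMap.mul ℝ (Matrix (Fin m) (Fin m) ℝ))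

@[simp] lemma trMulCLM_apply (C H : Matrix (Fin n) (Fin n) ℝ) : trMulCLM n C H = (C * H).trace := rfl

lemma trace_powD (A : Matrix (Fin n) (Fin n) ℝ) (k : ℕ) :
    (tCLM n).comp (powD A k) = (k : ℝ) • trMulCLM n (A ^ (k - 1)) := by
  refine ContinuousLinearMap.ext fun H => ?_
  simp only [ContinuousLinearMap.comp_apply, powD, ContinuousLinearMap.sum_apply,
    ContinuousLinearMap.mulLeftRight_apply, tCLM_apply, ContinuousLinearMap.smul_apply,
    trMulCLM_apply, smul_eq_mul, map_sum]
  have : ∀ j ∈ Finset.range k, (A ^ j * H * A ^ (k - 1 - j)).trace = (A ^ (k - 1) * H).trace := by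
    intro j hj
    rw [Finset.mem_range] at hj
    rw [Matrix.trace_mul_cycle, ← pow_add]
    congr 3
    omega
  rw [Finset.sum_congr rfl this, Finset.sum_const, Finset.card_range, nsmul_eq_mul]

lemma entry_le_norm (A : Matrix (Fin n) (Fin n) ℝ) (i j : Fin n) : |A i j| ≤ ‖A‖ := by
  rw [Matrix.frobenius_norm_def]
  have h1 : |A i j| ^ (2:ℝ) ≤ ∑ i', ∑ j', ‖A i' j'‖ ^ (2:ℝ) := by
    calc |A i j| ^ (2:ℝ) = ‖A i j‖ ^ (2:ℝ) := by rw [Real.norm_eq_abs]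
    _ ≤ ∑ j', ‖A i j'‖ ^ (2:ℝ) :=
        Finset.single_le_sum (f := fun j' => ‖A i j'‖ ^ (2:ℝ))
          (fun _ _ => by positivity) (Finset.mem_univ j)
    _ ≤ ∑ i', ∑ j', ‖A i' j'‖ ^ (2:ℝ) :=
        Finset.single_le_sum (f := fun i' => ∑ j', ‖A i' j'‖ ^ (2:ℝ))
          (fun _ _ => by positivity) (Finset.mem_univ i)
  have h2 := Real.rpow_le_rpow (by positivity) h1 (by norm_num : (0:ℝ) ≤ 1/2)
  calc |A i j| = (|A i j| ^ (2:ℝ)) ^ (1/2:ℝ) := by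
        rw [← Real.rpow_mul (abs_nonneg _)]
        norm_num
  _ ≤ _ := h2

lemma trMulCLM_norm_le (C : Matrix (Fin n) (Fin n) ℝ) : ‖trMulCLM n C‖ ≤ (n:ℝ)^2 * ‖C‖ := by
  refine ContinuousLinearMap.opNorm_le_bound _ (by positivity) fun H => ?_
  rw [trMulCLM_apply]
  have : (C * H).trace = ∑ i, ∑ j, C i j * H j i := by
    simp [Matrix.trace, Matrix.diag, Matrix.mul_apply]
  rw [this, Real.norm_eq_abs]
  calc |∑ i, ∑ j, C i j * H j i| ≤ ∑ i, ∑ j, |C i j * H j i| := by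
        refine (Finset.abs_sum_le_sum_abs _ _).trans ?_
        exact Finset.sum_le_sum fun i _ => Finset.abs_sum_le_sum_abs _ _
  _ ≤ ∑ _i : Fin n, ∑ _j : Fin n, ‖C‖ * ‖H‖ := by
        refine Finset.sum_le_sum fun i _ => Finset.sum_le_sum fun j _ => ?_
        rw [abs_mul]
        exact mul_le_mul (entry_le_norm C i j) (entry_le_norm H j i) (abs_nonneg _)
          (norm_nonneg _)
  _ = (n:ℝ)^2 * ‖C‖ * ‖H‖ := by
        simp [Finset.sum_const]
        ring

lemma hasSum_derivSeries (A : Matrix (Fin n) (Fin n) ℝ) :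
    HasSum (fun k : ℕ => ((k.factorial : ℝ)⁻¹ * k) • A ^ (k - 1)) (exp A) := by
  have h : HasSum (fun j : ℕ => ((j.factorial : ℝ)⁻¹) • A ^ j) (exp A) :=
    exp_series_hasSum_exp' A
  set c : ℕ → Matrix (Fin n) (Fin n) ℝ := fun k => ((k.factorial : ℝ)⁻¹ * k) • A ^ (k - 1) with hc
  have he : (fun j : ℕ => c (j + 1)) = fun j : ℕ => ((j.factorial : ℝ)⁻¹) • A ^ j := by
    funext j
    simp only [hc, Nat.add_sub_cancel]
    congr 1
    rw [Nat.factorial_succ, Nat.cast_mul]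
    have hj : ((j.factorial : ℝ)) ≠ 0 := Nat.cast_ne_zero.2 (Nat.factorial_ne_zero j)
    have hj1 : ((j:ℝ) + 1) ≠ 0 := by positivity
    push_cast
    field_simp
  have h2 : HasSum (fun j : ℕ => c (j + 1)) (exp A) := by rw [he]; exact h
  have h3 := (hasSum_nat_add_iff (f := c) 1).mp h2
  simpa [hc] using h3

lemma fact_succ_inv (j : ℕ) :
    (((j+1).factorial : ℝ))⁻¹ * ((j:ℝ)+1) = (j.factorial : ℝ)⁻¹ := by
  rw [Nat.factorial_succ, Nat.cast_mul]
  have hj : ((j.factorial : ℝ)) ≠ 0 := Nat.cast_ne_zero.2 (Nat.factorial_ne_zero j)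
  have hj1 : ((j:ℝ) + 1) ≠ 0 := by positivity
  push_cast
  field_simp

lemma pow_norm_bound {B : Matrix (Fin n) (Fin n) ℝ} {R : ℝ} (hBR : ‖B‖ ≤ R) (hR : 0 ≤ R) (j : ℕ) :
    ‖B ^ j‖ ≤ (‖(1 : Matrix (Fin n) (Fin n) ℝ)‖ + 1) * R ^ j := by
  cases j with
  | zero =>
    simp only [pow_zero, mul_one]
    linarith [norm_nonneg (1 : Matrix (Fin n) (Fin n) ℝ)]
  | succ j =>
    calc ‖B ^ (j+1)‖ ≤ ‖B‖ ^ (j+1) := norm_pow_le' B j.succ_pos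
    _ ≤ R ^ (j+1) := pow_le_pow_left₀ (norm_nonneg _) hBR _
    _ ≤ (‖(1 : Matrix (Fin n) (Fin n) ℝ)‖ + 1) * R ^ (j+1) := by
        have h1 : (1:ℝ) ≤ ‖(1 : Matrix (Fin n) (Fin n) ℝ)‖ + 1 := by linarith [norm_nonneg (1 : Matrix (Fin n) (Fin n) ℝ)]
        nlinarith [pow_nonneg hR (j+1)]

lemma hasFDerivAt_traceExp (A : Matrix (Fin n) (Fin n) ℝ) :
    HasFDerivAt (fun B : Matrix (Fin n) (Fin n) ℝ => (exp B).trace) (trMulCLM n (exp A)) A := by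
  set R : ℝ := ‖A‖ + 1 with hRdef
  have hR : 0 ≤ R := by positivity
  set C1 : ℝ := ‖(1 : Matrix (Fin n) (Fin n) ℝ)‖ + 1 with hC1def
  set u : ℕ → ℝ := fun k =>
    ((k.factorial : ℝ)⁻¹ * k) * ((n:ℝ)^2 * (C1 * R ^ (k-1))) with hu_def
  set f : ℕ → Matrix (Fin n) (Fin n) ℝ → ℝ := fun k B => (k.factorial : ℝ)⁻¹ • (B ^ k).trace with hf_def
  set f' : ℕ → Matrix (Fin n) (Fin n) ℝ → (Matrix (Fin n) (Fin n) ℝ →L[ℝ] ℝ) :=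
    fun k B => ((k.factorial:ℝ)⁻¹ * k) • trMulCLM n (B ^ (k-1)) with hf'_def
  have hu : Summable u := by
    refine (summable_nat_add_iff 1).mp ?_
    have : (fun j : ℕ => u (j + 1)) =
        fun j : ℕ => ((n:ℝ)^2 * C1) * (R ^ j / j.factorial) := by
      funext j
      simp only [hu_def, Nat.add_sub_cancel]
      have hfs : ((j+1).factorial : ℝ)⁻¹ * (((j+1):ℕ):ℝ) = (j.factorial : ℝ)⁻¹ := by
        push_cast
        exact fact_succ_inv j
      rw [hfs, div_eq_mul_inv]
      ring
    rw [this]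
    exact (Real.summable_pow_div_factorial R).mul_left _
  have hf : ∀ (k : ℕ) (B : Matrix (Fin n) (Fin n) ℝ), B ∈ Metric.ball A 1 → HasFDerivAt (f k) (f' k B) B := by
    intro k B _
    have h1 : HasFDerivAt (fun B : Matrix (Fin n) (Fin n) ℝ => (B ^ k).trace) ((tCLM n).comp (powD B k)) B :=
      (tCLM n).hasFDerivAt.comp B (hasFDerivAt_pow_mat k B)
    have h2 := h1.const_smul ((k.factorial : ℝ)⁻¹)
    refine h2.congr_fderiv ?_
    rw [trace_powD, smul_smul]
  have hf' : ∀ (k : ℕ) (B : Matrix (Fin n) (Fin n) ℝ), B ∈ Metric.ball A 1 → ‖f' k B‖ ≤ u k := by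
    intro k B hB
    have hBR : ‖B‖ ≤ R := by
      have := Metric.mem_ball.mp hB
      rw [dist_eq_norm] at this
      calc ‖B‖ = ‖B - A + A‖ := by rw [show B - A + A = B from by abel]
      _ ≤ ‖B - A‖ + ‖A‖ := norm_add_le _ _
      _ ≤ R := by rw [hRdef]; linarith
    have hk0 : (0:ℝ) ≤ (k.factorial : ℝ)⁻¹ * k := by positivity
    have hb : ‖f' k B‖ ≤ ((k.factorial:ℝ)⁻¹ * k) * ((n:ℝ)^2 * ‖B ^ (k-1)‖) := by
      rw [hf'_def]
      simp only []
      refine (_root_.norm_smul_le ((k.factorial:ℝ)⁻¹ * (k:ℝ)) (trMulCLM n (B ^ (k-1)))).trans ?_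
      rw [Real.norm_eq_abs, abs_of_nonneg hk0]
      exact mul_le_mul_of_nonneg_left (trMulCLM_norm_le _) hk0
    refine hb.trans ?_
    rw [hu_def]
    refine mul_le_mul_of_nonneg_left ?_ hk0
    refine mul_le_mul_of_nonneg_left ?_ (by positivity)
    exact pow_norm_bound hBR hR (k-1)
  have hs0 : HasSum (fun k => f k A) ((exp A).trace) := by
    have h := (tCLM n).hasSum (exp_series_hasSum_exp' (𝕂 := ℝ) A)
    simpa [hf_def, _root_.map_smul] using h
  have main := hasFDerivAt_tsum_of_isPreconnected hu Metric.isOpen_ball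
    (convex_ball A 1).isPreconnected hf hf' (Metric.mem_ball_self one_pos) hs0.summable
    (Metric.mem_ball_self one_pos)
  have funeq : (fun B : Matrix (Fin n) (Fin n) ℝ => ∑' k, f k B) = fun B : Matrix (Fin n) (Fin n) ℝ => (exp B).trace := by
    funext B
    have h := (tCLM n).hasSum (exp_series_hasSum_exp' (𝕂 := ℝ) B)
    have h2 : HasSum (fun k => f k B) ((exp B).trace) := by
      simpa [hf_def, _root_.map_smul] using h
    exact h2.tsum_eq
  have derivEq : ∑' k, f' k A = trMulCLM n (exp A) := by
    have h := (trMulCLM n).hasSum (hasSum_derivSeries A)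
    have h2 : HasSum (fun k => f' k A) (trMulCLM n (exp A)) := by
      simpa [hf'_def, _root_.map_smul] using h
    exact h2.tsum_eq
  rw [funeq] at main
  exact main.congr_fderiv derivEq
lemma trace_exp_pos (hn : 0 < n) {A : Matrix (Fin n) (Fin n) ℝ} (hA : A.IsHermitian) :
    0 < (exp A).trace := by
  haveI : Nonempty (Fin n) := ⟨⟨0, hn⟩⟩
  have hAt : Aᵀ = A := by
    rw [← Matrix.conjTranspose_eq_transpose_of_trivial]
    exact hA
  set B : Matrix (Fin n) (Fin n) ℝ := exp ((2:ℝ)⁻¹ • A) with hBdef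
  have hBB : exp A = B * B := by
    rw [← exp_add_of_commute (Commute.refl ((2:ℝ)⁻¹ • A))]
    congr 1
    rw [← add_smul]
    norm_num
  have hBt : Bᵀ = B := by
    rw [hBdef]
    have h := Matrix.exp_transpose ((2:ℝ)⁻¹ • A)
    rw [Matrix.transpose_smul, hAt] at h
    exact h.symm
  have hB0 : B ≠ 0 := by
    intro h0
    have : IsUnit (exp ((2:ℝ)⁻¹ • A)) := Matrix.isUnit_exp ((2:ℝ)⁻¹ • A)
    rw [← hBdef, h0] at this
    exact not_isUnit_zero this
  obtain ⟨i, j, hij⟩ : ∃ i j, B i j ≠ 0 := by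
    by_contra h
    push_neg at h
    exact hB0 (by ext i j; simp [h i j])
  have htr : (exp A).trace = ∑ i, ∑ j, (B i j)^2 := by
    rw [hBB]
    simp only [Matrix.trace, Matrix.diag, Matrix.mul_apply]
    refine Finset.sum_congr rfl fun i _ => Finset.sum_congr rfl fun j _ => ?_
    have : B j i = B i j := by conv_lhs => rw [← hBt, Matrix.transpose_apply]
    rw [this, sq]
  rw [htr]
  refine Finset.sum_pos' (fun i _ => Finset.sum_nonneg fun j _ => sq_nonneg _) ?_
  exact ⟨i, Finset.mem_univ i, Finset.sum_pos' (fun j _ => sq_nonneg _)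
    ⟨j, Finset.mem_univ j, by positivity⟩⟩

end Aux

/-- The gradient of `ω*(Y) = log tr exp(Y + Iₙ)` w.r.t. the Frobenius
(trace) inner product is the Gibbs state: the Fréchet derivative at `Y` is the linear
functional `H ↦ tr((exp(Y + Iₙ)/tr exp(Y + Iₙ)) · H)`. -/
theorem stmt9 {n : ℕ} (Y : Matrix (Fin n) (Fin n) ℝ) (hY : Y.IsHermitian) :
    HasFDerivAt (fun W : Matrix (Fin n) (Fin n) ℝ => qentStar W)
      (LinearMap.toContinuousLinearMap
        ((Matrix.traceLinearMap (Fin n) ℝ ℝ).comp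
          (LinearMap.mulLeft ℝ (gibbs Y)))) Y := by
  rcases Nat.eq_zero_or_pos n with hn | hn
  · subst hn
    haveI : Subsingleton (Matrix (Fin 0) (Fin 0) ℝ) :=
      ⟨fun a b => by ext i j; exact i.elim0⟩
    have hfun : (fun W : Matrix (Fin 0) (Fin 0) ℝ => qentStar W) = fun _ => qentStar Y :=
      funext fun W => by rw [Subsingleton.elim W Y]
    have hclm : (LinearMap.toContinuousLinearMap
        ((Matrix.traceLinearMap (Fin 0) ℝ ℝ).comp
          (LinearMap.mulLeft ℝ (gibbs Y)))) = 0 := by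
      refine ContinuousLinearMap.ext fun H => ?_
      rw [Subsingleton.elim H (0 : Matrix (Fin 0) (Fin 0) ℝ)]
      simp
    rw [hfun, hclm]
    exact hasFDerivAt_const _ _
  · have hA : (Y + 1).IsHermitian := hY.add Matrix.isHermitian_one
    have hpos : 0 < (NormedSpace.exp (Y + 1)).trace := trace_exp_pos hn hA
    have h1 : HasFDerivAt (fun W : Matrix (Fin n) (Fin n) ℝ => W + 1)
        (ContinuousLinearMap.id ℝ (Matrix (Fin n) (Fin n) ℝ)) Y :=
      (hasFDerivAt_id Y).add_const 1
    have h2 := (hasFDerivAt_traceExp (Y + 1)).comp Y h1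
    have h3 := (Real.hasDerivAt_log (ne_of_gt hpos)).comp_hasFDerivAt Y h2
    refine HasFDerivAt.congr_fderiv h3 ?_
    refine ContinuousLinearMap.ext fun H => ?_
    simp only [ContinuousLinearMap.smul_apply, ContinuousLinearMap.comp_apply,
      ContinuousLinearMap.coe_id', id_eq, trMulCLM_apply, smul_eq_mul,
      Function.comp_apply]
    show ((NormedSpace.exp (Y + 1)).trace)⁻¹ * ((NormedSpace.exp (Y + 1)) * H).trace =
      (Matrix.traceLinearMap (Fin n) ℝ ℝ) (LinearMap.mulLeft ℝ (gibbs Y) H)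
    simp only [Matrix.traceLinearMap_apply, LinearMap.mulLeft_apply, gibbs, expm,
      Matrix.smul_mul, Matrix.trace_smul, smul_eq_mul]
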